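/- Let k be a field of characteristic 0 and U = k⟨⟨X₀,X₁⟩⟩. For ψ ∈ U let d_ψ be the continuous derivation of U with d_ψ(X₀) = 0 and d_ψ(X₁) = [X₁, ψ], and define s_ψ(v) = ψv + d_ψ(v). Then for any ψ₁, ψ₂ ∈ U, defining the Ihara-type bracket {ψ₁,ψ₂} = d_{ψ₂}(ψ₁) − d_{ψ₁}(ψ₂) − [ψ₁,ψ₂], one has s_{{ψ₁,ψ₂}} = [s_{ψ₂}, s_{ψ₁}] = s_{ψ₂}∘s_{ψ₁} − s_{ψ₁}∘s_{ψ₂} as k-linear endomorphisms of U. -/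

import Mathlib

/- STATEMENT 12: with d_ψ the derivation d_ψ(X₀)=0, d_ψ(X₁)=[X₁,ψ],
s_ψ(v) = ψv + d_ψ(v), and {ψ₁,ψ₂} = d_{ψ₂}(ψ₁) - d_{ψ₁}(ψ₂) - [ψ₁,ψ₂], one has
s_{{ψ₁,ψ₂}} = [s_{ψ₂}, s_{ψ₁}]. -/

set_option linter.unusedSectionVars false

noncomputable section

variable (k : Type) [Field k] [CharZero k]

abbrev U := FreeAlgebra k (Fin 2)

def X0 : U k := FreeAlgebra.ι k 0
def X1 : U k := FreeAlgebra.ι k 1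

def derOn (g : Fin 2 → U k) : U k →ₗ[k] U k :=
  (FreeAlgebra.basisFreeMonoid k (Fin 2)).constr k fun w =>
    ∑ i ∈ Finset.range (FreeMonoid.toList w).length,
      (((FreeMonoid.toList w).take i).map (FreeAlgebra.ι k)).prod *
        g ((FreeMonoid.toList w).getD i 0) *
        (((FreeMonoid.toList w).drop (i + 1)).map (FreeAlgebra.ι k)).prod

/-- `d_ψ`. -/
def dF (ψ : U k) : U k →ₗ[k] U k := derOn k ![0, X1 k * ψ - ψ * X1 k]

/-- `s_ψ(v) = ψ·v + d_ψ(v)`. -/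
def sF (ψ : U k) (v : U k) : U k := ψ * v + dF k ψ v

/-- The Ihara-type bracket `{ψ₁,ψ₂} = d_{ψ₂}(ψ₁) − d_{ψ₁}(ψ₂) − [ψ₁,ψ₂]`. -/
def br (ψ₁ ψ₂ : U k) : U k := dF k ψ₂ ψ₁ - dF k ψ₁ ψ₂ - (ψ₁ * ψ₂ - ψ₂ * ψ₁)

open TrivSqZeroExt

lemma prod_map_of (l : List (Fin 2)) : (l.map FreeMonoid.of).prod = FreeMonoid.ofList l := by
  induction l with
  | nil => rfl
  | cons a l ih => rw [List.map_cons, List.prod_cons, ih, FreeMonoid.ofList_cons]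

lemma basis_apply (w : FreeMonoid (Fin 2)) :
    FreeAlgebra.basisFreeMonoid k (Fin 2) w = ((FreeMonoid.toList w).map (FreeAlgebra.ι k)).prod := by
  have h1 : FreeAlgebra.basisFreeMonoid k (Fin 2) w
      = (FreeAlgebra.equivMonoidAlgebraFreeMonoid (R := k) (X := Fin 2)).symm
        (MonoidAlgebra.single w 1) := by
    rw [FreeAlgebra.basisFreeMonoid, Module.Basis.map_apply, Finsupp.coe_basisSingleOne]
    rfl
  rw [h1, AlgEquiv.symm_apply_eq, map_list_prod, List.map_map]
  have h0 : (FreeAlgebra.equivMonoidAlgebraFreeMonoid (R := k) (X := Fin 2)) ∘ FreeAlgebra.ι k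
      = fun x => (MonoidAlgebra.of k (FreeMonoid (Fin 2))) (FreeMonoid.of x) := by
    funext x
    simp [FreeAlgebra.equivMonoidAlgebraFreeMonoid]
  rw [h0]
  have h2 : (List.map (fun x => (MonoidAlgebra.of k (FreeMonoid (Fin 2))) (FreeMonoid.of x))
      (FreeMonoid.toList w)).prod
      = MonoidAlgebra.of k (FreeMonoid (Fin 2)) ((FreeMonoid.toList w).map FreeMonoid.of).prod := by
    conv_rhs => rw [map_list_prod, List.map_map]
    rfl
  rw [h2, prod_map_of, FreeMonoid.ofList_toList]
  rfl

/-- Algebra map into the trivial square-zero extension recording a derivation. -/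
def Fh (g : Fin 2 → U k) : U k →ₐ[k] TrivSqZeroExt (U k) (U k) :=
  FreeAlgebra.lift k fun i => inl (FreeAlgebra.ι k i) + inr (g i)

lemma fst_Fh (g : Fin 2 → U k) (a : U k) : (Fh k g a).fst = a := by
  have h : (TrivSqZeroExt.fstHom k (U k) (U k)).comp (Fh k g) = AlgHom.id k (U k) := by
    apply FreeAlgebra.hom_ext; funext i; simp [Fh]
  exact DFunLike.congr_fun h a

def wsum (g : Fin 2 → U k) (l : List (Fin 2)) : U k :=
  ∑ i ∈ Finset.range l.length,
    ((l.take i).map (FreeAlgebra.ι k)).prod * g (l.getD i 0) *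
      ((l.drop (i + 1)).map (FreeAlgebra.ι k)).prod

lemma wsum_cons (g : Fin 2 → U k) (a : Fin 2) (l : List (Fin 2)) :
    wsum k g (a :: l)
      = g a * ((l.map (FreeAlgebra.ι k)).prod) + FreeAlgebra.ι k a * wsum k g l := by
  rw [wsum, List.length_cons, Finset.sum_range_succ']
  simp only [List.take_succ_cons, List.getD_cons_succ, List.drop_succ_cons, List.map_cons,
    List.prod_cons, List.take_zero, List.getD_cons_zero, List.drop_one, List.prod_nil,
    List.map_nil, one_mul, List.tail_cons]
  rw [wsum, Finset.mul_sum, add_comm]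
  congr 1
  apply Finset.sum_congr rfl
  intro i _
  noncomm_ring

lemma Fh_prod (g : Fin 2 → U k) (l : List (Fin 2)) :
    Fh k g ((l.map (FreeAlgebra.ι k)).prod)
      = inl ((l.map (FreeAlgebra.ι k)).prod) + inr (wsum k g l) := by
  induction l with
  | nil => simp [wsum]
  | cons a l ih =>
    rw [List.map_cons, List.prod_cons, map_mul, ih, wsum_cons]
    rw [Fh]
    rw [FreeAlgebra.lift_ι_apply]
    rw [add_mul, mul_add, mul_add, inl_mul_inl, inl_mul_inr, inr_mul_inl, inr_mul_inr]
    rw [smul_eq_mul, op_smul_eq_mul]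
    rw [inr_add]
    abel

lemma derOn_apply (g : Fin 2 → U k) (v : U k) : derOn k g v = (Fh k g v).snd := by
  have h : derOn k g
      = ((TrivSqZeroExt.sndHom (U k) (U k)).restrictScalars k).comp (Fh k g).toLinearMap := by
    apply (FreeAlgebra.basisFreeMonoid k (Fin 2)).ext
    intro w
    rw [derOn, Module.Basis.constr_basis]
    simp only [LinearMap.coe_comp, LinearMap.coe_restrictScalars, Function.comp_apply,
      AlgHom.toLinearMap_apply, sndHom_apply]
    rw [basis_apply, Fh_prod, snd_add, snd_inl, snd_inr, zero_add]
    rfl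
  rw [h]; rfl

lemma derOn_mul (g : Fin 2 → U k) (a b : U k) :
    derOn k g (a * b) = derOn k g a * b + a * derOn k g b := by
  simp only [derOn_apply, map_mul, snd_mul, fst_Fh, smul_eq_mul, op_smul_eq_mul]
  abel

lemma derOn_ι (g : Fin 2 → U k) (i : Fin 2) : derOn k g (FreeAlgebra.ι k i) = g i := by
  rw [derOn_apply, Fh, FreeAlgebra.lift_ι_apply, snd_add, snd_inl, snd_inr, zero_add]

lemma derOn_algebraMap (g : Fin 2 → U k) (c : k) :
    derOn k g (algebraMap k (U k) c) = 0 := by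
  rw [derOn_apply, AlgHom.commutes]
  rw [TrivSqZeroExt.algebraMap_eq_inl']
  exact snd_inl _ _

lemma dF_mul (ψ a b : U k) : dF k ψ (a * b) = dF k ψ a * b + a * dF k ψ b :=
  derOn_mul k _ a b

lemma dF_X0 (ψ : U k) : dF k ψ (X0 k) = 0 := by
  rw [dF, X0, derOn_ι]; rfl

lemma dF_X1 (ψ : U k) : dF k ψ (X1 k) = X1 k * ψ - ψ * X1 k := by
  rw [dF, X1, derOn_ι]; rfl

lemma dF_algebraMap (ψ : U k) (c : k) : dF k ψ (algebraMap k (U k) c) = 0 :=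
  derOn_algebraMap k _ c

lemma dF_comm (ψ₁ ψ₂ : U k) (v : U k) :
    dF k ψ₂ (dF k ψ₁ v) - dF k ψ₁ (dF k ψ₂ v) = dF k (br k ψ₁ ψ₂) v := by
  induction v using FreeAlgebra.induction with
  | grade0 c => simp [dF_algebraMap]
  | grade1 i =>
    fin_cases i
    · show dF k ψ₂ (dF k ψ₁ (X0 k)) - dF k ψ₁ (dF k ψ₂ (X0 k)) = dF k (br k ψ₁ ψ₂) (X0 k)
      simp [dF_X0]
    · show dF k ψ₂ (dF k ψ₁ (X1 k)) - dF k ψ₁ (dF k ψ₂ (X1 k)) = dF k (br k ψ₁ ψ₂) (X1 k)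
      rw [dF_X1, dF_X1, dF_X1, br]
      simp only [map_sub, dF_mul, dF_X1]
      noncomm_ring
  | mul a b ha hb =>
    simp only [dF_mul, map_add]
    rw [← ha, ← hb]
    noncomm_ring
  | add a b ha hb =>
    simp only [map_add]
    rw [← ha, ← hb]
    abel

theorem s_bracket (ψ₁ ψ₂ : U k) :
    ∀ v : U k, sF k (br k ψ₁ ψ₂) v = sF k ψ₂ (sF k ψ₁ v) - sF k ψ₁ (sF k ψ₂ v) := by
  intro v
  simp only [sF, map_add, dF_mul]
  rw [← dF_comm]
  rw [br]
  noncomm_ring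

end
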